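/- Let Δ be an oriented n-dimensional pseudomanifold on d vertices and f = x_1⋯x_d. Then the extensions of J(Δ) and of the toric ideal I_𝒜 to the localization S_f coincide: J(Δ)S_f = I_𝒜 S_f. -/

import Mathlib

open Finset

/-- The Koszul/simplicial sign of the vertex `i` inside the subset `s`: `(−1)^p` where
`p` is the number of elements of `s` strictly smaller than `i`. -/
def simpSgn {d : ℕ} (s : Finset (Fin d)) (i : Fin d) : ℤ := (-1) ^ (s.filter (· < i)).card

/-- An oriented pseudomanifold of dimension `n` on the `d` vertices `{0,…,d−1}`:
a collection of facets, each an `(n+1)`-element subset of the vertices, equipped with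
orientations (recorded, relative to the standard orientation coming from the ordering
of the vertices, by a sign `sgn σ = ±1`), such that every `n`-element subset of the
vertices lies in exactly zero or two facets, in the latter case the induced
orientations cancelling, and whose dual graph (a vertex for each facet, an edge when
two facets share an `n`-element subset) is connected. -/
structure OrientedPseudomanifold (n d : ℕ) where
  facets : Finset (Finset (Fin d))
  card_eq : ∀ σ ∈ facets, σ.card = n + 1
  sgn : Finset (Fin d) → ℤ
  sgn_pm : ∀ σ ∈ facets, sgn σ = 1 ∨ sgn σ = -1
  ridge : ∀ t : Finset (Fin d), t.card = n →
    (facets.filter (fun σ => t ⊆ σ)).card = 0 ∨ (facets.filter (fun σ => t ⊆ σ)).card = 2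
  cancel : ∀ t : Finset (Fin d), t.card = n →
    ∑ σ ∈ facets.filter (fun σ => t ⊆ σ), sgn σ * ∑ i ∈ σ \ t, simpSgn σ i = 0
  connected : (SimpleGraph.fromRel (fun (σ τ : {x // x ∈ facets}) =>
    ((σ : Finset (Fin d)) ∩ (τ : Finset (Fin d))).card = n)).Connected



open MvPolynomial

noncomputable section

variable {n d : ℕ} (k : Type*) [Field k] (Δ : OrientedPseudomanifold n d)

/-- The variables of the ring `S = k[x₁,…,x_d, y_σ (σ ∈ Δ_n)]`. -/
abbrev PMVars (Δ : OrientedPseudomanifold n d) : Type := Fin d ⊕ {x // x ∈ Δ.facets}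

/-- The multidegree (weight) of a variable: `deg x_i = e_i`,
`deg y_σ = wt(σ) = e_0 − Σ_{j∈σ} e_j`, in `ℤ^{d+1}` (coordinate `0` is `e_0`, and
coordinate `i.succ` is `e_i`). -/
def wtv : PMVars Δ → (Fin (d + 1) →₀ ℤ) :=
  Sum.elim (fun i => Finsupp.single i.succ 1)
    (fun σ => Finsupp.single 0 1 - ∑ j ∈ (σ : Finset (Fin d)), Finsupp.single j.succ 1)

/-- `e₀ ∈ ℤ^{d+1}`. -/
def e0 (d : ℕ) : Fin (d + 1) →₀ ℤ := Finsupp.single 0 1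

/-- The toric ideal `I_𝒜 ⊆ S` of the point configuration
`𝒜 = {e_1,…,e_d} ∪ {wt(σ) : σ ∈ Δ_n}`: the kernel of the `k`-algebra map to the
Laurent polynomial ring sending each variable to the monomial with exponent its
weight. -/
def toricIdealPM : Ideal (MvPolynomial (PMVars Δ) k) :=
  RingHom.ker (MvPolynomial.aeval (fun v =>
    (AddMonoidAlgebra.single (wtv Δ v) 1 : AddMonoidAlgebra k (Fin (d + 1) →₀ ℤ)))).toRingHom

/-- The binomial ideal `J(Δ)`, generated by the binomials `x_i y_σ − x_j y_τ` over all
pairs of facets `σ, τ` and vertices `i ∈ σ`, `j ∈ τ` with `σ∖{i} = τ∖{j}`. -/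
def JofPM : Ideal (MvPolynomial (PMVars Δ) k) :=
  Ideal.span {p | ∃ (σ τ : {x // x ∈ Δ.facets}) (i j : Fin d),
    i ∈ (σ : Finset (Fin d)) ∧ j ∈ (τ : Finset (Fin d)) ∧
    (σ : Finset (Fin d)).erase i = (τ : Finset (Fin d)).erase j ∧
    p = X (Sum.inl i) * X (Sum.inr σ) - X (Sum.inl j) * X (Sum.inr τ)}

/-- The product of the `x`-variables. -/
def xProd : MvPolynomial (PMVars Δ) k := ∏ i : Fin d, X (Sum.inl i)

/-- `J_Δ = J(Δ) : (x₁⋯x_d)^∞`, the saturation of `J(Δ)` at the product of the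
`x`-variables. -/
def JsatPM : Ideal (MvPolynomial (PMVars Δ) k) :=
  ⨆ m : ℕ, Submodule.colon (JofPM k Δ) (Ideal.span {xProd k Δ ^ m})

/-- The defining ideal `L_Δ` of the Rees algebra of the Stanley–Reisner ideal of the
Alexander dual of `Δ`: the kernel of the map `S → k[x₁,…,x_d,t]`, `x_i ↦ x_i`,
`y_σ ↦ t·∏_{i∉σ} x_i` (the extra variable `t` is `X none`). -/
def LofPM : Ideal (MvPolynomial (PMVars Δ) k) :=
  RingHom.ker (MvPolynomial.aeval (Sum.elim
    (fun i => (X (some i) : MvPolynomial (Option (Fin d)) k))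
    (fun (σ : {x // x ∈ Δ.facets}) => X none * ∏ i ∈ (σ : Finset (Fin d))ᶜ, X (some i)))).toRingHom

/-- The faces of the simplicial complex `Δ_m(𝒜)` (for `m = e₀`), per Hochster's
formula: subsets `I` of the point configuration `𝒜` (indexed by the variables) with
`e₀ − Σ_{a ∈ I} a` in the affine semigroup `ℕ𝒜`. -/
def facesDeltaE0 : Set (Finset (PMVars Δ)) :=
  {I | (e0 d - ∑ v ∈ I, wtv Δ v) ∈ AddSubmonoid.closure (Set.range (wtv Δ))}

/-- The faces of `Δ`, regarded as the simplicial complex generated by its facets. -/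
def facesPM (Δ : OrientedPseudomanifold n d) : Set (Finset (Fin d)) :=
  {t | ∃ σ ∈ Δ.facets, t ⊆ σ}

/-- The geometric realization of an abstract simplicial complex with (finite) vertex
set `V` and face set `K`, as a subspace of `V → ℝ`. -/
def realization (V : Type*) [Fintype V] (K : Set (Finset V)) : Set (V → ℝ) :=
  {f | (∀ v, 0 ≤ f v) ∧ (∑ v, f v = 1) ∧ ∃ s ∈ K, ∀ v, f v ≠ 0 → v ∈ s}

end
/-! ### Auxiliary constructions for the proof -/

noncomputable section AuxProof

open MvPolynomial

variable {n d : ℕ} (k : Type*) [Field k] (Δ : OrientedPseudomanifold n d)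

/-- Exponent of each variable in the intermediate Laurent-type algebra
`k[x₁^{±1},…,x_d^{±1}, U]`, with exponent monoid `(Fin d →₀ ℤ) × ℕ`:
`x_i ↦ (e_i, 0)`, `y_σ ↦ (∑_{l∉σ} e_l, 1)`. -/
def pmExp (Δ : OrientedPseudomanifold n d) : PMVars Δ → (Fin d →₀ ℤ) × ℕ :=
  Sum.elim (fun i => (Finsupp.single i 1, 0))
    (fun σ => (∑ l ∈ (σ : Finset (Fin d))ᶜ, Finsupp.single l 1, 1))

/-- The monomial map `α : S → k[(Fin d →₀ ℤ) × ℕ]`. -/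
def pmAlpha : MvPolynomial (PMVars Δ) k →+* AddMonoidAlgebra k ((Fin d →₀ ℤ) × ℕ) :=
  (MvPolynomial.aeval (fun v =>
    (AddMonoidAlgebra.single (pmExp Δ v) 1 :
      AddMonoidAlgebra k ((Fin d →₀ ℤ) × ℕ)))).toRingHom

/-- `w = e₀ − ∑_l e_{l+1} ∈ ℤ^{d+1}`, the weight of `U`. -/
def pmW (d : ℕ) : Fin (d + 1) →₀ ℤ :=
  Finsupp.single 0 1 - ∑ l : Fin d, Finsupp.single l.succ 1

/-- The additive map on exponents `(a, m) ↦ emb(a) + m • w`. -/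
def pmG (d : ℕ) : ((Fin d →₀ ℤ) × ℕ) →+ (Fin (d + 1) →₀ ℤ) :=
  (Finsupp.mapDomain.addMonoidHom Fin.succ).coprod (multiplesHom _ (pmW d))

lemma pmW_apply_zero (d : ℕ) : pmW d 0 = 1 := by
  simp only [pmW, Finsupp.sub_apply, Finsupp.single_apply, Finsupp.finset_sum_apply]
  rw [Finset.sum_eq_zero (fun l _ => by simp [Finsupp.single_apply, Fin.succ_ne_zero])]
  simp

lemma pmG_apply_zero (d : ℕ) (a : Fin d →₀ ℤ) (m : ℕ) : pmG d (a, m) 0 = m := by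
  have h1 : Finsupp.mapDomain (Fin.succ) a 0 = 0 :=
    Finsupp.mapDomain_notin_range _ _ (by simp [Set.range, Fin.succ_ne_zero])
  simp [pmG, AddMonoidHom.coprod_apply, Finsupp.add_apply, Finsupp.mapDomain.addMonoidHom_apply,
    h1, multiplesHom_apply, Finsupp.smul_apply, pmW_apply_zero]

lemma pmG_injective (d : ℕ) : Function.Injective (pmG d) := by
  rintro ⟨a, m⟩ ⟨b, l⟩ h
  have h0 : (m : ℤ) = (l : ℤ) := by
    rw [← pmG_apply_zero d a m, ← pmG_apply_zero d b l, h]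
  have hm : m = l := Int.ofNat_inj.mp h0
  subst hm
  have h1 : Finsupp.mapDomain (Fin.succ) a + m • pmW d
      = Finsupp.mapDomain (Fin.succ) b + m • pmW d := by
    simpa [pmG, AddMonoidHom.coprod_apply, Finsupp.mapDomain.addMonoidHom_apply,
      multiplesHom_apply] using h
  have h2 := add_right_cancel h1
  exact Prod.ext (Finsupp.mapDomain_injective (Fin.succ_injective d) h2) rfl

/-- The weight map `φ` defining the toric ideal, as a ring hom. -/
def pmPhi : MvPolynomial (PMVars Δ) k →+* AddMonoidAlgebra k (Fin (d + 1) →₀ ℤ) :=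
  (MvPolynomial.aeval (fun v =>
    (AddMonoidAlgebra.single (wtv Δ v) 1 :
      AddMonoidAlgebra k (Fin (d + 1) →₀ ℤ)))).toRingHom

lemma pmPhi_factor :
    (AddMonoidAlgebra.mapDomainRingHom k (pmG d)).comp (pmAlpha k Δ) = pmPhi k Δ := by
  apply MvPolynomial.ringHom_ext
  · intro a
    simp [pmAlpha, pmPhi, MvPolynomial.aeval_C, AddMonoidAlgebra.coe_algebraMap,
      Finsupp.mapDomain_single]
  · intro v
    have base : ∀ u : PMVars Δ,
        (AddMonoidAlgebra.mapDomainRingHom k (pmG d)) ((pmAlpha k Δ) (X u))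
          = AddMonoidAlgebra.single (pmG d (pmExp Δ u)) 1 := by
      intro u
      simp [pmAlpha, MvPolynomial.aeval_X, Finsupp.mapDomain_single]
    rw [RingHom.comp_apply, base v]
    have : pmG d (pmExp Δ v) = wtv Δ v := by
      cases v with
      | inl i =>
        simp [pmExp, pmG, wtv, AddMonoidHom.coprod_apply,
          Finsupp.mapDomain.addMonoidHom_apply, Finsupp.mapDomain_single,
          multiplesHom_apply]
      | inr σ =>
        have hmd : Finsupp.mapDomain (Fin.succ)
            (∑ l ∈ (σ : Finset (Fin d))ᶜ, Finsupp.single l (1 : ℤ))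
            = ∑ l ∈ (σ : Finset (Fin d))ᶜ, Finsupp.single l.succ (1 : ℤ) := by
          rw [Finsupp.mapDomain_finset_sum]
          exact Finset.sum_congr rfl fun l _ => Finsupp.mapDomain_single
        have hsplit : (∑ l : Fin d, Finsupp.single l.succ (1 : ℤ))
            = (∑ l ∈ (σ : Finset (Fin d)), Finsupp.single l.succ (1 : ℤ))
              + ∑ l ∈ (σ : Finset (Fin d))ᶜ, Finsupp.single l.succ (1 : ℤ) :=
          (Finset.sum_add_sum_compl _ _).symm
        simp only [pmExp, pmG, wtv, Sum.elim_inr, AddMonoidHom.coprod_apply,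
          Finsupp.mapDomain.addMonoidHom_apply, multiplesHom_apply, one_nsmul, hmd, pmW, hsplit]
        abel
    rw [this]
    simp [pmPhi, MvPolynomial.aeval_X]

lemma pmAlpha_gen_zero {σ τ : {x // x ∈ Δ.facets}} {i j : Fin d}
    (hi : i ∈ (σ : Finset (Fin d))) (hj : j ∈ (τ : Finset (Fin d)))
    (he : (σ : Finset (Fin d)).erase i = (τ : Finset (Fin d)).erase j) :
    pmAlpha k Δ (X (Sum.inl i) * X (Sum.inr σ) - X (Sum.inl j) * X (Sum.inr τ)) = 0 := by
  have key : ∀ (s : Finset (Fin d)) (a : Fin d), a ∈ s →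
      Finsupp.single a (1 : ℤ) + ∑ l ∈ sᶜ, Finsupp.single l (1 : ℤ)
        = ∑ l ∈ (s.erase a)ᶜ, Finsupp.single l (1 : ℤ) := by
    intro s a ha
    rw [Finset.compl_erase, Finset.sum_insert (by simp [ha])]
  have hexp : pmExp Δ (Sum.inl i) + pmExp Δ (Sum.inr σ)
      = pmExp Δ (Sum.inl j) + pmExp Δ (Sum.inr τ) := by
    refine Prod.ext ?_ rfl
    show Finsupp.single i 1 + ∑ l ∈ (σ : Finset (Fin d))ᶜ, Finsupp.single l (1 : ℤ)
      = Finsupp.single j 1 + ∑ l ∈ (τ : Finset (Fin d))ᶜ, Finsupp.single l (1 : ℤ)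
    rw [key _ i hi, key _ j hj, he]
  simp only [map_sub, map_mul, pmAlpha, AlgHom.toRingHom_eq_coe, RingHom.coe_coe,
    MvPolynomial.aeval_X, AddMonoidAlgebra.single_mul_single, one_mul]
  rw [hexp, sub_self]

lemma pmJ_le_ker : JofPM k Δ ≤ RingHom.ker (pmAlpha k Δ) := by
  rw [JofPM, Ideal.span_le]
  rintro p ⟨σ, τ, i, j, hi, hj, he, rfl⟩
  exact pmAlpha_gen_zero k Δ hi hj he

end AuxProof

noncomputable section AuxProof2
set_option synthInstance.maxHeartbeats 1000000
set_option maxHeartbeats 1000000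

open MvPolynomial

variable {n d : ℕ} (k : Type*) [Field k] (Δ : OrientedPseudomanifold n d)

/-- The extension of `J(Δ)` to the localization. -/
def pmJext : Ideal (Localization.Away (xProd k Δ)) :=
  Ideal.map (algebraMap (MvPolynomial (PMVars Δ) k) (Localization.Away (xProd k Δ)))
    (JofPM k Δ)

/-- The composite `S → S_f → S_f / J S_f`. -/
def pmP : MvPolynomial (PMVars Δ) k →+* (Localization.Away (xProd k Δ)) ⧸ pmJext k Δ :=
  (Ideal.Quotient.mk (pmJext k Δ)).comp
    (algebraMap (MvPolynomial (PMVars Δ) k) (Localization.Away (xProd k Δ)))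

lemma pmP_zero_of_mem {p : MvPolynomial (PMVars Δ) k} (hp : p ∈ JofPM k Δ) :
    pmP k Δ p = 0 := by
  have : algebraMap (MvPolynomial (PMVars Δ) k) (Localization.Away (xProd k Δ)) p
      ∈ pmJext k Δ := Ideal.mem_map_of_mem _ hp
  exact Ideal.Quotient.eq_zero_iff_mem.mpr this

lemma pmP_f_isUnit : IsUnit (pmP k Δ (xProd k Δ)) := by
  have h : IsUnit (algebraMap (MvPolynomial (PMVars Δ) k)
      (Localization.Away (xProd k Δ)) (xProd k Δ)) :=
    IsLocalization.Away.algebraMap_isUnit (xProd k Δ)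
  exact h.map (Ideal.Quotient.mk (pmJext k Δ))

lemma pmP_x_isUnit (i : Fin d) : IsUnit (pmP k Δ (X (Sum.inl i))) := by
  have hx : xProd k Δ = X (Sum.inl i) * ∏ l ∈ Finset.univ.erase i, X (Sum.inl l) :=
    (Finset.mul_prod_erase Finset.univ _ (Finset.mem_univ i)).symm
  have hdvd : (pmP k Δ (X (Sum.inl i)) : Localization.Away (xProd k Δ) ⧸ pmJext k Δ)
      ∣ pmP k Δ (xProd k Δ) :=
    ⟨pmP k Δ (∏ l ∈ Finset.univ.erase i, X (Sum.inl l)), by rw [← RingHom.map_mul, ← hx]⟩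
  exact isUnit_of_dvd_unit (α := Localization.Away (xProd k Δ) ⧸ pmJext k Δ) hdvd (pmP_f_isUnit k Δ)

/-- Adjacent facets satisfy the basic relation after multiplying by vertex products. -/
lemma pmP_y_adj (σ τ : {x // x ∈ Δ.facets}) (hne : σ ≠ τ)
    (hcard : ((σ : Finset (Fin d)) ∩ (τ : Finset (Fin d))).card = n) :
    pmP k Δ (X (Sum.inr σ) * ∏ l ∈ (σ : Finset (Fin d)), X (Sum.inl l))
      = pmP k Δ (X (Sum.inr τ) * ∏ l ∈ (τ : Finset (Fin d)), X (Sum.inl l)) := by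
  set s := (σ : Finset (Fin d)) with hs
  set t := (τ : Finset (Fin d)) with ht
  have hsc : s.card = n + 1 := Δ.card_eq _ σ.2
  have htc : t.card = n + 1 := Δ.card_eq _ τ.2
  have hsd : (s \ t).card = 1 := by
    have := Finset.card_inter_add_card_sdiff s t
    omega
  have htd : (t \ s).card = 1 := by
    have := Finset.card_inter_add_card_sdiff t s
    rw [Finset.inter_comm] at hcard
    omega
  obtain ⟨i, hi⟩ := Finset.card_eq_one.mp hsd
  obtain ⟨j, hj⟩ := Finset.card_eq_one.mp htd
  have his : i ∈ s ∧ i ∉ t := by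
    have : i ∈ s \ t := by rw [hi]; exact Finset.mem_singleton_self i
    exact ⟨(Finset.mem_sdiff.mp this).1, (Finset.mem_sdiff.mp this).2⟩
  have hjt : j ∈ t ∧ j ∉ s := by
    have : j ∈ t \ s := by rw [hj]; exact Finset.mem_singleton_self j
    exact ⟨(Finset.mem_sdiff.mp this).1, (Finset.mem_sdiff.mp this).2⟩
  have he : s.erase i = t.erase j := by
    rw [Finset.erase_eq, Finset.erase_eq, ← hi, ← hj,
      Finset.sdiff_sdiff_self_left, Finset.sdiff_sdiff_self_left, Finset.inter_comm]
  have hgen : (X (Sum.inl i) * X (Sum.inr σ) - X (Sum.inl j) * X (Sum.inr τ) :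
      MvPolynomial (PMVars Δ) k) ∈ JofPM k Δ := by
    apply Ideal.subset_span
    exact ⟨σ, τ, i, j, his.1, hjt.1, he, rfl⟩
  have hrel : pmP k Δ (X (Sum.inl i) * X (Sum.inr σ))
      = pmP k Δ (X (Sum.inl j) * X (Sum.inr τ)) := by
    have := pmP_zero_of_mem k Δ hgen
    rw [map_sub, sub_eq_zero] at this
    exact this
  have hps : (∏ l ∈ s, (X (Sum.inl l) : MvPolynomial (PMVars Δ) k))
      = X (Sum.inl i) * ∏ l ∈ s.erase i, X (Sum.inl l) :=
    (Finset.mul_prod_erase s _ his.1).symm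
  have hpt : (∏ l ∈ t, (X (Sum.inl l) : MvPolynomial (PMVars Δ) k))
      = X (Sum.inl j) * ∏ l ∈ t.erase j, X (Sum.inl l) :=
    (Finset.mul_prod_erase t _ hjt.1).symm
  calc pmP k Δ (X (Sum.inr σ) * ∏ l ∈ s, X (Sum.inl l))
      = pmP k Δ (X (Sum.inl i) * X (Sum.inr σ))
        * pmP k Δ (∏ l ∈ s.erase i, X (Sum.inl l)) := by
        rw [hps, ← RingHom.map_mul]; ring_nf
    _ = pmP k Δ (X (Sum.inl j) * X (Sum.inr τ))
        * pmP k Δ (∏ l ∈ t.erase j, X (Sum.inl l)) := by rw [hrel, he]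
    _ = pmP k Δ (X (Sum.inr τ) * ∏ l ∈ t, X (Sum.inl l)) := by
        rw [hpt, ← RingHom.map_mul]; ring_nf

/-- By connectivity of the dual graph, `y_σ ∏_{l∈σ} x_l` has the same image for all facets. -/
lemma pmP_y_eq (σ τ : {x // x ∈ Δ.facets}) :
    pmP k Δ (X (Sum.inr σ) * ∏ l ∈ (σ : Finset (Fin d)), X (Sum.inl l))
      = pmP k Δ (X (Sum.inr τ) * ∏ l ∈ (τ : Finset (Fin d)), X (Sum.inl l)) := by
  obtain ⟨w⟩ := Δ.connected.preconnected σ τ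
  induction w with
  | nil => rfl
  | @cons a b c hab _ ih =>
    refine Eq.trans ?_ ih
    rw [SimpleGraph.fromRel_adj] at hab
    obtain ⟨hne, hcard⟩ := hab
    rcases hcard with h | h
    · exact pmP_y_adj k Δ a b hne h
    · rw [Finset.inter_comm] at h
      exact pmP_y_adj k Δ a b hne h

end AuxProof2

noncomputable section AuxProof3
set_option synthInstance.maxHeartbeats 1000000
set_option maxHeartbeats 1000000

open MvPolynomial

variable {n d : ℕ} (k : Type*) [Field k] (Δ : OrientedPseudomanifold n d)

/-- Abbreviation for the quotient ring `S_f / J(Δ) S_f`. -/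
abbrev pmQuot := Localization.Away (xProd k Δ) ⧸ pmJext k Δ

/-- The unit of `pmQuot` given by the image of `x_i`. -/
def pmXU (i : Fin d) : (pmQuot k Δ)ˣ := (pmP_x_isUnit k Δ i).unit

/-- The unit of `pmQuot` given by the image of `f = x₁⋯x_d`. -/
def pmFU : (pmQuot k Δ)ˣ := (pmP_f_isUnit k Δ).unit

instance : Nonempty {x // x ∈ Δ.facets} := Δ.connected.nonempty

instance : CommGroup (pmQuot k Δ)ˣ := @Units.instCommGroupUnits (pmQuot k Δ) inferInstance

/-- The common image of `y_σ ∏_{l∈σ} x_l` in `pmQuot`, divided by the unit `f`. -/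
def pmUU : pmQuot k Δ :=
  pmP k Δ (X (Sum.inr (Classical.arbitrary {x // x ∈ Δ.facets}))
      * ∏ l ∈ ((Classical.arbitrary {x // x ∈ Δ.facets} : {x // x ∈ Δ.facets}) :
          Finset (Fin d)), X (Sum.inl l))
    * ↑(pmFU k Δ)⁻¹

lemma pmUU_spec (σ : {x // x ∈ Δ.facets}) :
    pmUU k Δ = pmP k Δ (X (Sum.inr σ) * ∏ l ∈ (σ : Finset (Fin d)), X (Sum.inl l))
      * ↑(pmFU k Δ)⁻¹ := by
  rw [pmUU, pmP_y_eq k Δ _ σ]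

/-- The group-hom part on `x`-exponents: `a ↦ ∏ x_i^{a_i}` with values in units. -/
def pmE : (Fin d →₀ ℤ) →+ Additive ((pmQuot k Δ)ˣ) :=
  Finsupp.liftAddHom fun i => zmultiplesHom _ (Additive.ofMul (pmXU k Δ i))

/-- The monoid hom from the exponent monoid into `pmQuot`. -/
def pmMon : Multiplicative ((Fin d →₀ ℤ) × ℕ) →* pmQuot k Δ where
  toFun z := ((pmE k Δ z.toAdd.1).toMul : (pmQuot k Δ)ˣ) * (pmUU k Δ) ^ z.toAdd.2
  map_one' := by
    simp
  map_mul' x y := by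
    show ((pmE k Δ (x.toAdd.1 + y.toAdd.1)).toMul : (pmQuot k Δ)ˣ)
        * (pmUU k Δ) ^ (x.toAdd.2 + y.toAdd.2) = _
    rw [map_add, pow_add]
    push_cast [toMul_add]
    ring

/-- The lift `β : k[(Fin d →₀ ℤ) × ℕ] → pmQuot`. -/
def pmBeta : AddMonoidAlgebra k ((Fin d →₀ ℤ) × ℕ) →+* pmQuot k Δ :=
  AddMonoidAlgebra.liftNCRingHom ((pmP k Δ).comp (MvPolynomial.C))
    (pmMon k Δ) fun _ _ => by exact mul_comm (G := pmQuot k Δ) _ _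

lemma pmBeta_single (a : (Fin d →₀ ℤ) × ℕ) (b : k) :
    pmBeta k Δ (AddMonoidAlgebra.single a b)
      = pmP k Δ (MvPolynomial.C b) * pmMon k Δ (Multiplicative.ofAdd a) := by
  simp [pmBeta, AddMonoidAlgebra.liftNCRingHom]

lemma pmBeta_factor : (pmBeta k Δ).comp (pmAlpha k Δ) = pmP k Δ := by
  apply MvPolynomial.ringHom_ext
  · intro a
    rw [RingHom.comp_apply]
    have h1 : pmAlpha k Δ (MvPolynomial.C a) = AddMonoidAlgebra.single 0 a := by
      simp [pmAlpha, MvPolynomial.aeval_C, AddMonoidAlgebra.coe_algebraMap]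
    rw [h1, pmBeta_single]
    have h2 : pmMon k Δ (Multiplicative.ofAdd (0 : (Fin d →₀ ℤ) × ℕ)) = 1 :=
      map_one (pmMon k Δ)
    rw [h2]
    exact mul_one (M := pmQuot k Δ) _
  · intro v
    rw [RingHom.comp_apply]
    have h1 : pmAlpha k Δ (X v) = AddMonoidAlgebra.single (pmExp Δ v) 1 := by
      simp [pmAlpha, MvPolynomial.aeval_X]
    rw [h1, pmBeta_single]
    have hone : pmP k Δ (MvPolynomial.C (1 : k)) = 1 := by
      rw [map_one]; exact RingHom.map_one _
    rw [hone]
    refine Eq.trans (b := pmMon k Δ (Multiplicative.ofAdd (pmExp Δ v)))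
      (by exact one_mul (M := pmQuot k Δ) _) ?_
    cases v with
    | inl i =>
      show ((pmE k Δ (Finsupp.single i 1)).toMul : (pmQuot k Δ)ˣ) * (pmUU k Δ) ^ 0
          = pmP k Δ (X (Sum.inl i))
      have hE : pmE k Δ (Finsupp.single i 1) = Additive.ofMul (pmXU k Δ i) := by
        rw [pmE, Finsupp.liftAddHom_apply_single, zmultiplesHom_apply, one_zsmul]
      rw [hE, pow_zero, mul_one, toMul_ofMul]
      exact IsUnit.unit_spec _
    | inr σ =>
      show ((pmE k Δ (∑ l ∈ (σ : Finset (Fin d))ᶜ, Finsupp.single l 1)).toMul :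
            (pmQuot k Δ)ˣ) * (pmUU k Δ) ^ 1
          = pmP k Δ (X (Sum.inr σ))
      have hE : pmE k Δ (∑ l ∈ (σ : Finset (Fin d))ᶜ, Finsupp.single l 1)
          = ∑ l ∈ (σ : Finset (Fin d))ᶜ, Additive.ofMul (pmXU k Δ l) := by
        rw [map_sum]
        refine Finset.sum_congr rfl fun l _ => ?_
        rw [pmE, Finsupp.liftAddHom_apply_single, zmultiplesHom_apply, one_zsmul]
      have hcoe : ((pmE k Δ (∑ l ∈ (σ : Finset (Fin d))ᶜ, Finsupp.single l 1)).toMul :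
            pmQuot k Δ)
          = pmP k Δ (∏ l ∈ (σ : Finset (Fin d))ᶜ, X (Sum.inl l)) := by
        rw [hE, toMul_sum, ← Units.coeHom_apply, map_prod]
        have hPprod : pmP k Δ (∏ l ∈ (σ : Finset (Fin d))ᶜ, X (Sum.inl l))
            = ∏ l ∈ (σ : Finset (Fin d))ᶜ, pmP k Δ (X (Sum.inl l)) := map_prod _ _ _
        rw [hPprod]
        refine Finset.prod_congr rfl fun l _ => ?_
        rw [Units.coeHom_apply, toMul_ofMul]
        exact IsUnit.unit_spec _
      rw [pow_one, hcoe, pmUU_spec k Δ σ]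
      have hprod : (∏ l ∈ (σ : Finset (Fin d))ᶜ, (X (Sum.inl l) : MvPolynomial (PMVars Δ) k))
          * (X (Sum.inr σ) * ∏ l ∈ (σ : Finset (Fin d)), X (Sum.inl l))
          = X (Sum.inr σ) * xProd k Δ := by
        rw [xProd, ← Finset.prod_compl_mul_prod (σ : Finset (Fin d))]
        ring
      have hfu : pmP k Δ (xProd k Δ) = ↑(pmFU k Δ) := (IsUnit.unit_spec _).symm
      have h3 : pmP k Δ (∏ l ∈ (σ : Finset (Fin d))ᶜ, X (Sum.inl l))
          * pmP k Δ (X (Sum.inr σ) * ∏ l ∈ (σ : Finset (Fin d)), X (Sum.inl l))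
          = pmP k Δ (X (Sum.inr σ)) * ↑(pmFU k Δ) := by
        rw [← RingHom.map_mul, hprod, RingHom.map_mul, hfu]
      have hL : pmP k Δ (∏ l ∈ (σ : Finset (Fin d))ᶜ, X (Sum.inl l))
          * (pmP k Δ (X (Sum.inr σ) * ∏ l ∈ (σ : Finset (Fin d)), X (Sum.inl l))
            * ↑(pmFU k Δ)⁻¹)
          = pmP k Δ (X (Sum.inr σ)) * ↑(pmFU k Δ) * ↑(pmFU k Δ)⁻¹ := by
        calc pmP k Δ (∏ l ∈ (σ : Finset (Fin d))ᶜ, X (Sum.inl l))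
            * (pmP k Δ (X (Sum.inr σ) * ∏ l ∈ (σ : Finset (Fin d)), X (Sum.inl l))
              * ↑(pmFU k Δ)⁻¹)
            = pmP k Δ (∏ l ∈ (σ : Finset (Fin d))ᶜ, X (Sum.inl l))
              * pmP k Δ (X (Sum.inr σ) * ∏ l ∈ (σ : Finset (Fin d)), X (Sum.inl l))
              * ↑(pmFU k Δ)⁻¹ := by ring
          _ = pmP k Δ (X (Sum.inr σ)) * ↑(pmFU k Δ) * ↑(pmFU k Δ)⁻¹ := by rw [h3]
      rw [hL]
      exact Units.mul_inv_cancel_right _ _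

end AuxProof3



/-!
STATEMENT 12: for an oriented `n`-dimensional pseudomanifold `Δ` on `d` vertices and
`f = x₁⋯x_d`, the extensions of `J(Δ)` and of the toric ideal `I_𝒜` to the
localization `S_f` coincide.
-/

theorem JofPM_localization_eq_toric {n d : ℕ} (k : Type*) [Field k]
    (Δ : OrientedPseudomanifold n d) :
    Ideal.map (algebraMap (MvPolynomial (PMVars Δ) k) (Localization.Away (xProd k Δ)))
        (JofPM k Δ) =
      Ideal.map (algebraMap (MvPolynomial (PMVars Δ) k) (Localization.Away (xProd k Δ)))
        (toricIdealPM k Δ) := by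
  have hker : toricIdealPM k Δ = RingHom.ker (pmPhi k Δ) := rfl
  apply le_antisymm
  · apply Ideal.map_mono
    rw [JofPM, Ideal.span_le]
    rintro p ⟨σ, τ, i, j, hi, hj, he, rfl⟩
    show _ ∈ toricIdealPM k Δ
    rw [hker, RingHom.mem_ker, ← pmPhi_factor k Δ, RingHom.comp_apply,
      pmAlpha_gen_zero k Δ hi hj he, map_zero]
  · rw [Ideal.map_le_iff_le_comap]
    intro p hp
    have hphi : pmPhi k Δ p = 0 := RingHom.mem_ker.mp (hker ▸ hp)
    have h1 : AddMonoidAlgebra.mapDomainRingHom k (pmG d) (pmAlpha k Δ p) = pmPhi k Δ p := by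
      rw [← pmPhi_factor k Δ, RingHom.comp_apply]
    have h3 : AddMonoidAlgebra.mapDomain (pmG d) (pmAlpha k Δ p) = 0 := by
      have h2 := h1.trans hphi
      simpa [AddMonoidAlgebra.mapDomainRingHom_apply] using h2
    have halpha : pmAlpha k Δ p = 0 :=
      AddMonoidAlgebra.mapDomain_injective (pmG_injective d)
        (h3.trans (AddMonoidAlgebra.mapDomain_zero _).symm)
    have hP : pmP k Δ p = 0 := by
      rw [← pmBeta_factor k Δ, RingHom.comp_apply, halpha, map_zero]
    have hmem : algebraMap (MvPolynomial (PMVars Δ) k) (Localization.Away (xProd k Δ)) p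
        ∈ pmJext k Δ := Ideal.Quotient.eq_zero_iff_mem.mp hP
    exact Ideal.mem_comap.mpr hmem
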